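/- Let β > 0, J > 0 with βJ > 1/2, and let ψ(m) = (βJ/2)m² + 1 + log((√((1+m)/2)+√((1−m)/2))²) on [−1,1]. Then m = 0 is a critical point of ψ but not a local maximum, and ψ attains its global maximum exactly at the two points ±m*, where m* ∈ (0,1) satisfies √(1−m*²) = (1/2)(√(4/(βJ)+1) − 1). -/

import Mathlib

/-- The tilting function `ψ(m) = (βJ/2)m² + s(m,1)` for the Curie–Weiss interaction on
the orthoplicial model. -/
noncomputable def psiCW (β J m : ℝ) : ℝ :=
  (β * J / 2) * m ^ 2 + 1 + Real.log ((Real.sqrt ((1 + m)/2) + Real.sqrt ((1 - m)/2)) ^ 2)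


lemma psiCW_eq (β J : ℝ) {m : ℝ} (h1 : -1 ≤ m) (h2 : m ≤ 1) :
    psiCW β J m = (β*J/2) * m^2 + 1 + Real.log (1 + Real.sqrt (1 - m^2)) := by
  have ha : (0:ℝ) ≤ (1+m)/2 := by linarith
  have hb : (0:ℝ) ≤ (1-m)/2 := by linarith
  have hsq : (Real.sqrt ((1+m)/2) + Real.sqrt ((1-m)/2))^2
      = 1 + Real.sqrt (1 - m^2) := by
    have e1 : Real.sqrt ((1+m)/2) ^ 2 = (1+m)/2 := Real.sq_sqrt ha
    have e2 : Real.sqrt ((1-m)/2) ^ 2 = (1-m)/2 := Real.sq_sqrt hb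
    have e3 : Real.sqrt ((1+m)/2) * Real.sqrt ((1-m)/2) = Real.sqrt (1-m^2) / 2 := by
      rw [← Real.sqrt_mul ha]
      have h4 : (1+m)/2 * ((1-m)/2) = (1-m^2) * (1/2)^2 := by ring
      rw [h4, Real.sqrt_mul (by nlinarith : (0:ℝ) ≤ 1 - m^2),
        Real.sqrt_sq (by norm_num : (0:ℝ) ≤ 1/2)]
      ring
    nlinarith [e1, e2, e3]
  rw [psiCW, hsq]

lemma phi_lt {c u v : ℝ} (hc : 0 < c) (hv : 0 ≤ v) (hviden : c * v * (1+v) = 1)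
    (hu : 0 ≤ u) (hne : u ≠ v) :
    c/2 * (1 - u^2) + Real.log (1+u) < c/2 * (1 - v^2) + Real.log (1+v) := by
  have h1u : (0:ℝ) < 1 + u := by linarith
  have h1v : (0:ℝ) < 1 + v := by linarith
  have hx1 : (1+u)/(1+v) ≠ 1 := by
    intro hh
    apply hne
    field_simp at hh
    linarith
  have hlog : Real.log ((1+u)/(1+v)) < (1+u)/(1+v) - 1 :=
    Real.log_lt_sub_one_of_pos (by positivity) hx1
  rw [Real.log_div (by linarith) (by linarith)] at hlog
  have h2 : (1+u)/(1+v) - 1 = c * v * (u - v) := by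
    rw [div_sub_one (by linarith), div_eq_iff (by linarith)]
    nlinarith [hviden]
  rw [h2] at hlog
  nlinarith [hlog, sq_nonneg (u - v), hc]

set_option maxHeartbeats 1000000 in
/-- In the supercritical regime `βJ > 1/2`: `m = 0` is a critical point of `ψ` but not a
local maximum on `[-1,1]`, and `ψ` attains its global maximum on `[-1,1]` exactly at the
two symmetric points `±m*`, where `m* ∈ (0,1)` satisfies
`√(1−m*²) = (1/2)(√(4/(βJ)+1) − 1)`. -/
theorem psiCW_supercritical_maximizers (β J : ℝ) (hβ : 0 < β) (hJ : 0 < J)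
    (h : 1/2 < β * J) :
    HasDerivAt (psiCW β J) 0 0 ∧
    ¬ IsLocalMaxOn (psiCW β J) (Set.Icc (-1:ℝ) 1) 0 ∧
    ∃ mstar : ℝ, mstar ∈ Set.Ioo (0:ℝ) 1 ∧
      Real.sqrt (1 - mstar ^ 2) = (1/2) * (Real.sqrt (4/(β * J) + 1) - 1) ∧
      {x | x ∈ Set.Icc (-1:ℝ) 1 ∧ ∀ y ∈ Set.Icc (-1:ℝ) 1, psiCW β J y ≤ psiCW β J x} =
        {mstar, -mstar} := by
  have hc0 : 0 < β * J := mul_pos hβ hJ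
  refine ⟨?_, ?_, ?_⟩
  · -- m = 0 is a critical point
    have h1 : HasDerivAt (fun m : ℝ => 1 - m^2) 0 0 := by
      simpa using (hasDerivAt_pow 2 (0:ℝ)).const_sub 1
    have h2 : HasDerivAt (fun m : ℝ => Real.sqrt (1 - m^2)) 0 0 := by
      have hs : HasDerivAt Real.sqrt (1/(2*Real.sqrt 1)) ((fun m : ℝ => 1 - m^2) 0) := by
        simpa using Real.hasDerivAt_sqrt one_ne_zero
      simpa [Function.comp_def] using hs.comp 0 h1
    have h3 : HasDerivAt (fun m : ℝ => 1 + Real.sqrt (1 - m^2)) 0 0 := h2.const_add 1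
    have h4 : HasDerivAt (fun m : ℝ => Real.log (1 + Real.sqrt (1 - m^2))) 0 0 := by
      have hl : HasDerivAt Real.log ((2:ℝ)⁻¹) ((fun m : ℝ => 1 + Real.sqrt (1 - m^2)) 0) := by
        have he : ((fun m : ℝ => 1 + Real.sqrt (1 - m^2)) 0) = 2 := by norm_num
        rw [he]
        exact Real.hasDerivAt_log (by norm_num)
      simpa [Function.comp_def] using hl.comp 0 h3
    have h5 : HasDerivAt (fun m : ℝ => (β*J/2) * m^2) 0 0 := by
      simpa using (hasDerivAt_pow 2 (0:ℝ)).const_mul (β*J/2)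
    have hF : HasDerivAt
        (fun m : ℝ => (β*J/2) * m^2 + 1 + Real.log (1 + Real.sqrt (1 - m^2))) 0 0 := by
      simpa [Pi.add_def] using (h5.add_const 1).add h4
    have hmem : Set.Icc (-1:ℝ) 1 ∈ nhds (0:ℝ) := Icc_mem_nhds (by norm_num) (by norm_num)
    have hev : psiCW β J =ᶠ[nhds 0]
        (fun m : ℝ => (β*J/2) * m^2 + 1 + Real.log (1 + Real.sqrt (1 - m^2))) :=
      Filter.eventuallyEq_of_mem hmem (fun x hx => psiCW_eq β J hx.1 hx.2)
    exact hF.congr_of_eventuallyEq hev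
  · -- not a local maximum
    set t : ℝ := Real.sqrt (2/(β*J)) with ht_def
    have ht0 : 0 < t := Real.sqrt_pos.mpr (by positivity)
    have ht2 : t < 2 := by
      rw [ht_def, Real.sqrt_lt' (by norm_num : (0:ℝ) < 2), div_lt_iff₀ hc0]
      nlinarith
    have htsq : t^2 * (β*J) = 2 := by
      rw [Real.sq_sqrt (by positivity : (0:ℝ) ≤ 2/(β*J))]
      field_simp
    have key : ∀ m : ℝ, 0 < m → m ≤ 1 → m^2 < (2 - t)*t → psiCW β J 0 < psiCW β J m := by
      intro m hm0 hm1 hmt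
      set u : ℝ := Real.sqrt (1 - m^2) with hu_def
      have hm2 : m^2 ≤ 1 := by nlinarith
      have hu0 : 0 ≤ u := Real.sqrt_nonneg _
      have hu2 : u^2 = 1 - m^2 := Real.sq_sqrt (by linarith)
      have hut : t - 1 < u := by
        have hsq : (t-1)^2 < u^2 := by nlinarith
        exact lt_of_pow_lt_pow_left₀ 2 hu0 hsq
      have h1u : (0:ℝ) < 1 + u := by linarith
      have htu : t^2 < (1+u)^2 := by nlinarith
      have hsq2 : 2 < β*J*(1+u)^2 := by
        have h5 := mul_lt_mul_of_pos_left htu hc0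
        linarith [htsq, h5]
      have hlog : Real.log (2/(1+u)) ≤ 2/(1+u) - 1 :=
        Real.log_le_sub_one_of_pos (by positivity)
      have hld : Real.log (2/(1+u)) = Real.log 2 - Real.log (1+u) :=
        Real.log_div two_ne_zero (by linarith)
      have e1 : 2/(1+u) - 1 = m^2/(1+u)^2 := by
        field_simp
        nlinarith [hu2]
      rw [hld, e1] at hlog
      have hfin : m^2/(1+u)^2 < β*J/2 * m^2 := by
        rw [div_lt_iff₀ (by positivity)]
        nlinarith [hsq2, mul_pos hm0 hm0]
      rw [psiCW_eq β J (by linarith) hm1, psiCW_eq β J (by norm_num) (by norm_num)]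
      norm_num [Real.sqrt_one]
      rw [← hu_def]
      linarith [hlog, hfin]
    intro hmax
    obtain ⟨ε, hε, hsub⟩ := Metric.mem_nhdsWithin_iff.mp hmax
    have hd : 0 < (2-t)*t := by nlinarith
    have hsp : 0 < Real.sqrt ((2-t)*t) := Real.sqrt_pos.mpr hd
    set m : ℝ := min (ε/2) (min (1/2) (Real.sqrt ((2-t)*t) / 2)) with hm_def
    have hm0 : 0 < m := lt_min (by positivity) (lt_min (by norm_num) (by positivity))
    have hm1 : m ≤ 1 := (min_le_right _ _).trans ((min_le_left _ _).trans (by norm_num))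
    have hmr : m ≤ Real.sqrt ((2-t)*t) / 2 := (min_le_right _ _).trans (min_le_right _ _)
    have hmsq : m^2 < (2-t)*t := by
      have h6 : (Real.sqrt ((2-t)*t))^2 = (2-t)*t := Real.sq_sqrt hd.le
      nlinarith [hmr, hm0, hsp]
    have hmem : m ∈ Metric.ball (0:ℝ) ε ∩ Set.Icc (-1:ℝ) 1 := by
      constructor
      · rw [Metric.mem_ball, Real.dist_eq, sub_zero, abs_of_pos hm0]
        calc m ≤ ε/2 := min_le_left _ _
          _ < ε := by linarith
      · exact ⟨by linarith, hm1⟩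
    have h8 := hsub hmem
    have h7 := key m hm0 hm1 hmsq
    exact absurd h8 (by simp only [Set.mem_setOf_eq]; linarith)
  · -- the maximizers
    set s : ℝ := Real.sqrt (4/(β*J) + 1) with hs_def
    have hs2 : s^2 = 4/(β*J) + 1 := Real.sq_sqrt (by positivity)
    have hs1 : 1 < s := by
      have h9 : (1:ℝ)^2 < s^2 := by
        rw [hs2]
        have : 0 < 4/(β*J) := by positivity
        nlinarith
      exact lt_of_pow_lt_pow_left₀ 2 (Real.sqrt_nonneg _) h9
    have hs3 : s < 3 := by
      rw [hs_def, Real.sqrt_lt' (by norm_num : (0:ℝ) < 3),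
        div_add' _ _ _ (ne_of_gt hc0), div_lt_iff₀ hc0]
      nlinarith
    set v : ℝ := (s - 1)/2 with hv_def
    have hv0 : 0 < v := by rw [hv_def]; linarith
    have hv1 : v < 1 := by rw [hv_def]; linarith
    have hviden : (β*J) * v * (1+v) = 1 := by
      have e : (β*J) * v * (1 + v) = (β*J) * ((s^2 - 1)/4) := by rw [hv_def]; ring
      rw [e, hs2]
      field_simp
      ring
    set mstar : ℝ := Real.sqrt (1 - v^2) with hm_def
    have hms0 : 0 < mstar := Real.sqrt_pos.mpr (by nlinarith)
    have hms1 : mstar < 1 := by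
      rw [hm_def, Real.sqrt_lt' one_pos]
      nlinarith
    have hmsq : mstar^2 = 1 - v^2 := Real.sq_sqrt (by nlinarith)
    have heq : Real.sqrt (1 - mstar^2) = v := by
      rw [hmsq, show 1 - (1 - v^2) = v^2 by ring, Real.sqrt_sq hv0.le]
    refine ⟨mstar, ⟨hms0, hms1⟩, by rw [heq, hv_def]; ring, ?_⟩
    have hpsi : ∀ y ∈ Set.Icc (-1:ℝ) 1, psiCW β J y =
        (β*J)/2 * (1 - (Real.sqrt (1 - y^2))^2) + Real.log (1 + Real.sqrt (1 - y^2)) + 1 := by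
      intro y hy
      rw [psiCW_eq β J hy.1 hy.2,
        Real.sq_sqrt (by nlinarith [hy.1, hy.2] : (0:ℝ) ≤ 1 - y^2)]
      ring
    have hmm : mstar ∈ Set.Icc (-1:ℝ) 1 := ⟨by linarith, hms1.le⟩
    have hmm' : -mstar ∈ Set.Icc (-1:ℝ) 1 := ⟨by linarith, by linarith⟩
    have hvm : psiCW β J mstar = (β*J)/2 * (1 - v^2) + Real.log (1+v) + 1 := by
      rw [hpsi mstar hmm, heq]
    have hlt : ∀ y ∈ Set.Icc (-1:ℝ) 1, Real.sqrt (1 - y^2) ≠ v →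
        psiCW β J y < psiCW β J mstar := by
      intro y hy hne
      rw [hpsi y hy, hvm]
      have := phi_lt hc0 hv0.le hviden (Real.sqrt_nonneg (1 - y^2)) hne
      linarith
    have hle : ∀ y ∈ Set.Icc (-1:ℝ) 1, psiCW β J y ≤ psiCW β J mstar := by
      intro y hy
      rcases eq_or_ne (Real.sqrt (1 - y^2)) v with he | hne
      · rw [hpsi y hy, he, hvm]
      · exact (hlt y hy hne).le
    have hneg : psiCW β J (-mstar) = psiCW β J mstar := by
      rw [hpsi (-mstar) hmm', hpsi mstar hmm, neg_sq]
    ext x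
    simp only [Set.mem_setOf_eq, Set.mem_insert_iff, Set.mem_singleton_iff]
    constructor
    · rintro ⟨hx, hmax⟩
      by_contra hcon
      push_neg at hcon
      have hne : Real.sqrt (1 - x^2) ≠ v := by
        intro he
        have hx2 : 1 - x^2 = v^2 := by
          have := Real.sq_sqrt (by nlinarith [hx.1, hx.2] : (0:ℝ) ≤ 1 - x^2)
          rw [he] at this
          linarith [this]
        have hz : (x - mstar) * (x + mstar) = 0 := by nlinarith [hmsq]
        rcases mul_eq_zero.mp hz with h9 | h9
        · exact hcon.1 (by linarith)
        · exact hcon.2 (by linarith)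
      have h10 := hlt x hx hne
      have h11 := hmax mstar hmm
      linarith
    · rintro (rfl | rfl)
      · exact ⟨hmm, hle⟩
      · exact ⟨hmm', fun y hy => (hle y hy).trans hneg.ge⟩
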